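/- Let G be a finite simple graph on N vertices with augmented normalized Laplacian Δ̃ and P = I_N − Δ̃, and let λ > 0 be such that every eigenvalue μ of Δ̃ satisfies μ = 0 or μ ≥ λ and (1 − μ)² ≤ (1 − λ)²; set λ̄ = (1 − λ)². Let (W_l)_{l ∈ ℕ} be weight matrices in ℝ^{C×C} and suppose s ≥ σ_max(W_l)² for all l. Define X^{(l+1)} = ReLU(P X^{(l)} W_l) (ReLU applied entrywise) from an initial X^{(0)} ∈ ℝ^{N×C}. Then E(X^{(l)}) ≤ (s λ̄)^l · E(X^{(0)}) for all l ∈ ℕ; in particular, if s λ̄ < 1 then E(X^{(l)}) → 0 as l → ∞. -/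

import Mathlib

open Matrix

/-- The ReLU activation. -/
noncomputable def relu (x : ℝ) : ℝ := max x 0

/-- The spectral norm (largest singular value) of a real matrix. -/
noncomputable def matSpectralNorm {m n : ℕ} (M : Matrix (Fin m) (Fin n) ℝ) : ℝ :=
  ‖LinearMap.toContinuousLinearMap (Matrix.toEuclideanLin M)‖

lemma euclid_norm_sq {n : ℕ} (v : Fin n → ℝ) :
    ‖(WithLp.equiv 2 (Fin n → ℝ)).symm v‖ ^ 2 = v ⬝ᵥ v := by
  rw [EuclideanSpace.norm_eq, Real.sq_sqrt (by positivity)]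
  simp [dotProduct, sq]

lemma mulVec_sq_le {m n : ℕ} (M : Matrix (Fin m) (Fin n) ℝ) (v : Fin n → ℝ) :
    (M *ᵥ v) ⬝ᵥ (M *ᵥ v) ≤ matSpectralNorm M ^ 2 * (v ⬝ᵥ v) := by
  rw [← euclid_norm_sq, ← euclid_norm_sq, ← mul_pow]
  have h := (LinearMap.toContinuousLinearMap (Matrix.toEuclideanLin M)).le_opNorm
    ((WithLp.equiv 2 (Fin n → ℝ)).symm v)
  rw [LinearMap.coe_toContinuousLinearMap'] at h
  rw [Matrix.toEuclideanLin_apply_piLp_toLp] at h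
  exact pow_le_pow_left₀ (norm_nonneg _) h 2

lemma spectralNorm_transpose {n : ℕ} (M : Matrix (Fin n) (Fin n) ℝ) :
    matSpectralNorm Mᵀ = matSpectralNorm M := by
  rw [← Matrix.conjTranspose_eq_transpose_of_trivial]
  unfold matSpectralNorm
  rw [Matrix.toEuclideanLin_conjTranspose_eq_adjoint,
    LinearMap.adjoint_toContinuousLinearMap]
  exact ContinuousLinearMap.adjoint.norm_map _

lemma quadform_sum {N : ℕ} (B : Matrix (Fin N) (Fin N) ℝ) (hB : ∀ i j, B i j = B j i)
    (g d : Fin N → ℝ) (hrow : ∀ i, ∑ j, B i j = d i) (hgd : ∀ i, d i * (g i * g i) = 1)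
    (x : Fin N → ℝ) :
    x ⬝ᵥ ((1 - diagonal g * B * diagonal g) *ᵥ x)
      = (1/2) * ∑ i, ∑ j, B i j * (g i * x i - g j * x j)^2 := by
  have hM : ∀ i j, (1 - diagonal g * B * diagonal g) i j
      = (if i = j then 1 else 0) - g i * B i j * g j := by
    intro i j
    simp [Matrix.sub_apply, Matrix.one_apply, Matrix.mul_diagonal, Matrix.diagonal_mul]
  have hrowx : ∀ i, (∑ j, (1 - diagonal g * B * diagonal g) i j * x j)
      = x i - ∑ j, g i * B i j * g j * x j := by
    intro i
    rw [Finset.sum_congr rfl (fun j _ => by rw [hM i j, sub_mul])]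
    rw [Finset.sum_sub_distrib]
    congr 1
    simp
  have lhs_eq : x ⬝ᵥ ((1 - diagonal g * B * diagonal g) *ᵥ x)
      = (∑ i, x i * x i) - ∑ i, ∑ j, x i * (g i * B i j * g j * x j) := by
    simp only [dotProduct, mulVec, hrowx]
    rw [Finset.sum_congr rfl (fun i _ => mul_sub (x i) _ _), Finset.sum_sub_distrib]
    congr 1
    exact Finset.sum_congr rfl fun i _ => Finset.mul_sum _ _ _
  have S1 : ∑ i : Fin N, ∑ j : Fin N, B i j * (g i * x i * (g i * x i)) = ∑ i, x i * x i := by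
    refine Finset.sum_congr rfl fun i _ => ?_
    rw [← Finset.sum_mul, hrow]
    calc d i * (g i * x i * (g i * x i)) = (d i * (g i * g i)) * (x i * x i) := by ring
    _ = x i * x i := by rw [hgd i]; ring
  have S2 : ∑ i : Fin N, ∑ j : Fin N, B i j * (g j * x j * (g j * x j)) = ∑ i, x i * x i := by
    rw [Finset.sum_comm]
    calc ∑ j : Fin N, ∑ i : Fin N, B i j * (g j * x j * (g j * x j))
        = ∑ j : Fin N, ∑ i : Fin N, B j i * (g j * x j * (g j * x j)) := by
          exact Finset.sum_congr rfl fun j _ => Finset.sum_congr rfl fun i _ => by rw [hB i j]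
      _ = ∑ i, x i * x i := S1
  have expand : ∀ i j, B i j * (g i * x i - g j * x j)^2
      = B i j * (g i * x i * (g i * x i)) + B i j * (g j * x j * (g j * x j))
        - 2 * (x i * (g i * B i j * g j * x j)) := fun i j => by ring
  rw [lhs_eq]
  simp only [expand, Finset.sum_sub_distrib, Finset.sum_add_distrib, ← Finset.mul_sum]
  rw [S1, S2]
  ring

lemma relu_sq_sub_le (a b : ℝ) : (relu a - relu b)^2 ≤ (a - b)^2 := by
  rw [← sq_abs (relu a - relu b), ← sq_abs (a - b)]
  exact pow_le_pow_left₀ (abs_nonneg _) (abs_max_sub_max_le_abs a b 0) 2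

lemma relu_smul (c a : ℝ) (hc : 0 ≤ c) : c * relu a = relu (c * a) := by
  unfold relu
  rw [mul_max_of_nonneg _ _ hc, mul_zero]

lemma trace_quadform {N C : ℕ} (M : Matrix (Fin N) (Fin N) ℝ) (Y : Matrix (Fin N) (Fin C) ℝ) :
    Matrix.trace (Yᵀ * M * Y) = ∑ c, (fun i => Y i c) ⬝ᵥ (M *ᵥ fun i => Y i c) := by
  simp only [Matrix.trace, Matrix.diag, Matrix.mul_apply, Matrix.transpose_apply,
    dotProduct, mulVec]
  refine Finset.sum_congr rfl fun c _ => ?_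
  simp only [Finset.sum_mul, Finset.mul_sum]
  rw [Finset.sum_comm]
  exact Finset.sum_congr rfl fun i _ => Finset.sum_congr rfl fun j _ => by ring

lemma col_mul {N K C : ℕ} (M : Matrix (Fin N) (Fin K) ℝ) (Y : Matrix (Fin K) (Fin C) ℝ)
    (c : Fin C) :
    (fun i => (M * Y) i c) = M *ᵥ (fun i => Y i c) := by
  funext i; simp [Matrix.mul_apply, mulVec, dotProduct]

lemma row_dot_rows {K C : ℕ} (M : Matrix (Fin K) (Fin C) ℝ) :
    Matrix.trace (Mᵀ * M) = ∑ i, (fun c => M i c) ⬝ᵥ (fun c => M i c) := by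
  simp only [Matrix.trace, Matrix.diag, Matrix.mul_apply, Matrix.transpose_apply, dotProduct]
  exact Finset.sum_comm

lemma spectral_psd {N : ℕ} (Δ : Matrix (Fin N) (Fin N) ℝ) (hH : Δ.IsHermitian) (lb : ℝ)
    (h : ∀ (μ : ℝ) (u : Fin N → ℝ), u ≠ 0 → Δ.mulVec u = μ • u → 0 ≤ μ ∧ (1-μ)^2 ≤ lb) :
    Δ.PosSemidef ∧ (lb • Δ - (1 - Δ) * Δ * (1 - Δ)).PosSemidef := by
  set V : Matrix (Fin N) (Fin N) ℝ := (hH.eigenvectorUnitary : Matrix (Fin N) (Fin N) ℝ) with hV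
  set μ : Fin N → ℝ := hH.eigenvalues with hμ
  have hk : ∀ k, 0 ≤ μ k ∧ (1 - μ k)^2 ≤ lb := by
    intro k
    refine h (μ k) (hH.eigenvectorBasis k) ?_ (hH.mulVec_eigenvectorBasis k)
    have h0 : hH.eigenvectorBasis k ≠ 0 := hH.eigenvectorBasis.orthonormal.ne_zero k
    intro hc
    exact h0 (by simpa using hc)
  have hV1 : V * star V = 1 := Matrix.mem_unitaryGroup_iff.mp (hH.eigenvectorUnitary).2
  have hV2 : star V * V = 1 := Matrix.mem_unitaryGroup_iff'.mp (hH.eigenvectorUnitary).2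
  have hspec : Δ = V * Matrix.diagonal μ * star V := by
    have := hH.spectral_theorem
    simpa using this
  have psd_conj : ∀ f : Fin N → ℝ, (∀ k, 0 ≤ f k) →
      (V * Matrix.diagonal f * star V).PosSemidef := by
    intro f hf
    rw [Matrix.star_eq_conjTranspose]
    exact (Matrix.PosSemidef.diagonal hf).mul_mul_conjTranspose_same V
  constructor
  · rw [hspec]; exact psd_conj μ fun k => (hk k).1
  · have conj_mul : ∀ X Y : Matrix (Fin N) (Fin N) ℝ,
        (V * X * star V) * (V * Y * star V) = V * (X * Y) * star V := by
      intro X Y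
      simp only [Matrix.mul_assoc]
      rw [← Matrix.mul_assoc (star V) V, hV2, Matrix.one_mul]
    have hdiag1 : Matrix.diagonal (fun k => 1 - μ k)
        = 1 - Matrix.diagonal μ := by
      ext i j
      rcases eq_or_ne i j with rfl | hij
      · simp
      · simp [Matrix.diagonal_apply_ne _ hij, Matrix.one_apply_ne hij]
    have hone : (1 : Matrix (Fin N) (Fin N) ℝ) - Δ
        = V * Matrix.diagonal (fun k => 1 - μ k) * star V := by
      rw [hdiag1, Matrix.mul_sub, Matrix.sub_mul, Matrix.mul_one, hV1, ← hspec]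
    have key : lb • Δ - (1 - Δ) * Δ * (1 - Δ)
        = V * Matrix.diagonal (fun k => lb * μ k - (1 - μ k) * μ k * (1 - μ k)) * star V := by
      rw [hone]
      rw [hspec]
      rw [conj_mul, conj_mul, Matrix.diagonal_mul_diagonal, Matrix.diagonal_mul_diagonal]
      rw [show lb • (V * Matrix.diagonal μ * star V) = V * (lb • Matrix.diagonal μ) * star V by
        simp [Matrix.mul_smul, Matrix.smul_mul]]
      rw [← Matrix.sub_mul, ← Matrix.mul_sub]
      congr 2
      ext i j
      rcases eq_or_ne i j with rfl | hij
      · simp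
      · simp [Matrix.diagonal_apply_ne _ hij]
    rw [key]
    refine psd_conj _ fun k => ?_
    obtain ⟨h0, h1⟩ := hk k
    nlinarith

/-- For the GCN iteration `X^{(l+1)} = ReLU(P X^{(l)} W_l)` with
`σ_max(W_l)² ≤ s`, the Dirichlet energy satisfies
`E(X^{(l)}) ≤ (s λ̄)^l E(X^{(0)})` where `λ̄ = (1-λ)²` and `λ` is the smallest
nonzero eigenvalue of the augmented normalized Laplacian `Δ̃`; in particular,
`E(X^{(l)}) → 0` exponentially when `s λ̄ < 1`. -/
theorem gcn_energy_exponential_decay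
    (N : ℕ) (G : SimpleGraph (Fin N)) [DecidableRel G.Adj]
    (A D Atil Dtil DtilInvSqrt Δ P : Matrix (Fin N) (Fin N) ℝ)
    (hA : A = G.adjMatrix ℝ)
    (hD : D = Matrix.diagonal (fun i => (G.degree i : ℝ)))
    (hAtil : Atil = A + 1)
    (hDtil : Dtil = D + 1)
    (hDtilInvSqrt : DtilInvSqrt = Matrix.diagonal
      (fun i => (Real.sqrt ((G.degree i : ℝ) + 1))⁻¹))
    (hΔ : Δ = 1 - DtilInvSqrt * Atil * DtilInvSqrt)
    (hP : P = 1 - Δ)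
    (lam : ℝ) (hlam : 0 < lam)
    (heig : ∀ (μ : ℝ) (u : Fin N → ℝ), u ≠ 0 → Δ.mulVec u = μ • u →
      (μ = 0 ∨ lam ≤ μ) ∧ (1 - μ) ^ 2 ≤ (1 - lam) ^ 2)
    (C : ℕ) (W : ℕ → Matrix (Fin C) (Fin C) ℝ)
    (s : ℝ) (hs : ∀ l, (matSpectralNorm (W l)) ^ 2 ≤ s)
    (X : ℕ → Matrix (Fin N) (Fin C) ℝ)
    (hX : ∀ l, X (l + 1) = ((P * X l) * W l).map relu) :
    (∀ l : ℕ, Matrix.trace ((X l)ᵀ * Δ * X l) ≤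
        (s * (1 - lam) ^ 2) ^ l * Matrix.trace ((X 0)ᵀ * Δ * X 0)) ∧
    (s * (1 - lam) ^ 2 < 1 →
      Filter.Tendsto (fun l => Matrix.trace ((X l)ᵀ * Δ * X l))
        Filter.atTop (nhds 0)) := by
  -- notation
  set g : Fin N → ℝ := fun i => (Real.sqrt ((G.degree i : ℝ) + 1))⁻¹ with hg
  set B : Matrix (Fin N) (Fin N) ℝ := G.adjMatrix ℝ + 1 with hBdef
  set lb : ℝ := (1 - lam) ^ 2 with hlb
  have hΔ' : Δ = 1 - Matrix.diagonal g * B * Matrix.diagonal g := by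
    rw [hΔ, hDtilInvSqrt, hAtil, hA]
  have hg0 : ∀ i, 0 ≤ g i := fun i => by positivity
  have hBsym : ∀ i j, B i j = B j i := by
    intro i j
    rcases eq_or_ne i j with rfl | hij
    · rfl
    · simp only [hBdef, Matrix.add_apply, SimpleGraph.adjMatrix_apply,
        Matrix.one_apply_ne hij, Matrix.one_apply_ne (Ne.symm hij)]
      by_cases h : G.Adj i j
      · simp [h, h.symm]
      · have h' : ¬ G.Adj j i := fun h2 => h h2.symm
        simp [h, h']
  have hB0 : ∀ i j, 0 ≤ B i j := by
    intro i j
    simp only [hBdef, Matrix.add_apply, SimpleGraph.adjMatrix_apply, Matrix.one_apply]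
    positivity
  have hrow : ∀ i, ∑ j, B i j = (G.degree i : ℝ) + 1 := by
    intro i
    simp only [hBdef, Matrix.add_apply, Finset.sum_add_distrib]
    congr 1
    · have h := SimpleGraph.adjMatrix_mulVec_const_apply (G := G) (α := ℝ) (a := 1) (v := i)
      simpa [Matrix.mulVec, dotProduct] using h
    · simp [Matrix.one_apply]
  have hgd : ∀ i, ((G.degree i : ℝ) + 1) * (g i * g i) = 1 := by
    intro i
    have hd : (0:ℝ) < (G.degree i : ℝ) + 1 := by positivity
    rw [hg]
    simp only
    rw [← mul_inv, Real.mul_self_sqrt hd.le]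
    exact mul_inv_cancel₀ hd.ne'
  have hQF : ∀ x : Fin N → ℝ, x ⬝ᵥ (Δ *ᵥ x)
      = (1/2) * ∑ i, ∑ j, B i j * (g i * x i - g j * x j)^2 := by
    intro x
    rw [hΔ']
    exact quadform_sum B hBsym g _ hrow hgd x
  -- hermitian
  have hH : Δ.IsHermitian := by
    show Δᴴ = Δ
    rw [Matrix.conjTranspose_eq_transpose_of_trivial, hΔ', Matrix.transpose_sub,
      Matrix.transpose_one, Matrix.transpose_mul, Matrix.transpose_mul,
      Matrix.diagonal_transpose]
    have hBt : Bᵀ = B := by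
      ext i j; rw [Matrix.transpose_apply, hBsym j i]
    rw [hBt, Matrix.mul_assoc]
  have hpsd := spectral_psd Δ hH lb (by
    intro μ u hu he
    obtain ⟨h1, h2⟩ := heig μ u hu he
    refine ⟨?_, h2⟩
    rcases h1 with rfl | h1
    · exact le_refl 0
    · exact le_trans hlam.le h1)
  obtain ⟨hΔpsd, hMpsd⟩ := hpsd
  rw [← hP] at hMpsd
  have hPsym : Pᵀ = P := by
    rw [hP, Matrix.transpose_sub, Matrix.transpose_one]
    have : Δᵀ = Δ := by
      rw [← Matrix.conjTranspose_eq_transpose_of_trivial]; exact hH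
    rw [this]
  -- key per-column inequalities
  have hQnonneg : ∀ x : Fin N → ℝ, 0 ≤ x ⬝ᵥ (Δ *ᵥ x) := by
    intro x
    have := hΔpsd.dotProduct_mulVec_nonneg x
    simpa using this
  have hPstep : ∀ x : Fin N → ℝ, (P *ᵥ x) ⬝ᵥ (Δ *ᵥ (P *ᵥ x)) ≤ lb * (x ⬝ᵥ (Δ *ᵥ x)) := by
    intro x
    have h0 := hMpsd.dotProduct_mulVec_nonneg x
    simp only [star_trivial, Matrix.sub_mulVec, Matrix.smul_mulVec,
      dotProduct_sub, dotProduct_smul, smul_eq_mul] at h0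
    have heq : x ⬝ᵥ ((P * Δ * P) *ᵥ x) = (P *ᵥ x) ⬝ᵥ (Δ *ᵥ (P *ᵥ x)) := by
      rw [← Matrix.mulVec_mulVec, ← Matrix.mulVec_mulVec]
      rw [Matrix.dotProduct_mulVec x P]
      congr 1
      nth_rewrite 1 [← hPsym]
      exact Matrix.vecMul_transpose P x
    rw [heq] at h0
    linarith
  have hreluStep : ∀ x : Fin N → ℝ,
      (fun i => relu (x i)) ⬝ᵥ (Δ *ᵥ (fun i => relu (x i))) ≤ x ⬝ᵥ (Δ *ᵥ x) := by
    intro x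
    rw [hQF, hQF]
    have hhalf : (0:ℝ) ≤ 1/2 := by norm_num
    refine mul_le_mul_of_nonneg_left ?_ hhalf
    refine Finset.sum_le_sum fun i _ => Finset.sum_le_sum fun j _ => ?_
    refine mul_le_mul_of_nonneg_left ?_ (hB0 i j)
    rw [relu_smul _ _ (hg0 i), relu_smul _ _ (hg0 j)]
    exact relu_sq_sub_le _ _
  -- energy
  set E : Matrix (Fin N) (Fin C) ℝ → ℝ := fun Y => Matrix.trace (Yᵀ * Δ * Y) with hE
  have hEnonneg : ∀ Y, 0 ≤ E Y := by
    intro Y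
    rw [hE]
    simp only
    rw [trace_quadform]
    exact Finset.sum_nonneg fun c _ => hQnonneg _
  have hs0 : 0 ≤ s := le_trans (sq_nonneg _) (hs 0)
  have hlb0 : 0 ≤ lb := sq_nonneg _
  -- the W step
  have hWstep : ∀ (l : ℕ) (Z : Matrix (Fin N) (Fin C) ℝ), E (Z * W l) ≤ s * E Z := by
    intro l Z
    have hpsdM : (Zᵀ * Δ * Z).PosSemidef := by
      have := hΔpsd.conjTranspose_mul_mul_same Z
      rwa [Matrix.conjTranspose_eq_transpose_of_trivial] at this
    obtain ⟨Bm, hBm⟩ : ∃ Bm : Matrix (Fin C) (Fin C) ℝ, Zᵀ * Δ * Z = Bmᴴ * Bm := by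
      open scoped MatrixOrder Matrix.Norms.L2Operator in
      simpa [Matrix.star_eq_conjTranspose] using CStarAlgebra.nonneg_iff_eq_star_mul_self.mp hpsdM.nonneg
    rw [Matrix.conjTranspose_eq_transpose_of_trivial] at hBm
    have hlhs : E (Z * W l) = Matrix.trace ((Bm * W l)ᵀ * (Bm * W l)) := by
      rw [hE]
      simp only
      rw [Matrix.transpose_mul, Matrix.transpose_mul]
      calc Matrix.trace ((W l)ᵀ * Zᵀ * Δ * (Z * W l))
          = Matrix.trace ((W l)ᵀ * (Zᵀ * Δ * Z) * W l) := by
            congr 1; simp only [Matrix.mul_assoc]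
        _ = Matrix.trace ((W l)ᵀ * (Bmᵀ * Bm) * W l) := by rw [← hBm]
        _ = Matrix.trace ((W l)ᵀ * Bmᵀ * (Bm * W l)) := by
            congr 1; simp only [Matrix.mul_assoc]
    have hrhs : E Z = Matrix.trace (Bmᵀ * Bm) := by
      rw [hE]; simp only; rw [← hBm]
    rw [hlhs, hrhs, row_dot_rows, row_dot_rows]
    rw [Finset.mul_sum]
    refine Finset.sum_le_sum fun i _ => ?_
    have hrowmul : (fun c => (Bm * W l) i c) = (W l)ᵀ *ᵥ (fun k => Bm i k) := by
      funext c
      simp [Matrix.mul_apply, Matrix.mulVec, dotProduct, Matrix.transpose_apply, mul_comm]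
    rw [hrowmul]
    calc ((W l)ᵀ *ᵥ fun k => Bm i k) ⬝ᵥ ((W l)ᵀ *ᵥ fun k => Bm i k)
        ≤ matSpectralNorm (W l)ᵀ ^ 2 * ((fun k => Bm i k) ⬝ᵥ (fun k => Bm i k)) :=
          mulVec_sq_le _ _
      _ ≤ s * ((fun k => Bm i k) ⬝ᵥ (fun k => Bm i k)) := by
          refine mul_le_mul_of_nonneg_right ?_ ?_
          · rw [spectralNorm_transpose]; exact hs l
          · have h2 : (0:ℝ) ≤ ∑ k, Bm i k * Bm i k :=
              Finset.sum_nonneg fun k _ => mul_self_nonneg _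
            simpa [dotProduct] using h2
  -- the P step
  have hPstepE : ∀ Y : Matrix (Fin N) (Fin C) ℝ, E (P * Y) ≤ lb * E Y := by
    intro Y
    rw [hE]
    simp only
    rw [trace_quadform, trace_quadform, Finset.mul_sum]
    refine Finset.sum_le_sum fun c _ => ?_
    rw [col_mul]
    exact hPstep _
  -- the relu step
  have hreluE : ∀ Y : Matrix (Fin N) (Fin C) ℝ, E (Y.map relu) ≤ E Y := by
    intro Y
    rw [hE]
    simp only
    rw [trace_quadform, trace_quadform]
    refine Finset.sum_le_sum fun c _ => ?_
    have : (fun i => Y.map relu i c) = fun i => relu (Y i c) := by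
      funext i; simp [Matrix.map_apply]
    rw [this]
    exact hreluStep _
  -- one full step
  have hstep : ∀ l, E (X (l + 1)) ≤ (s * lb) * E (X l) := by
    intro l
    rw [hX l]
    calc E (((P * X l) * W l).map relu) ≤ E ((P * X l) * W l) := hreluE _
      _ ≤ s * E (P * X l) := hWstep l _
      _ ≤ s * (lb * E (X l)) := mul_le_mul_of_nonneg_left (hPstepE _) hs0
      _ = (s * lb) * E (X l) := by ring
  have hmain : ∀ l : ℕ, E (X l) ≤ (s * lb) ^ l * E (X 0) := by
    intro l
    induction l with
    | zero => simp
    | succ n ih =>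
      calc E (X (n + 1)) ≤ (s * lb) * E (X n) := hstep n
        _ ≤ (s * lb) * ((s * lb) ^ n * E (X 0)) := by
            refine mul_le_mul_of_nonneg_left ih ?_
            exact mul_nonneg hs0 hlb0
        _ = (s * lb) ^ (n + 1) * E (X 0) := by ring
  refine ⟨hmain, ?_⟩
  intro hlt
  have hsl0 : 0 ≤ s * lb := mul_nonneg hs0 hlb0
  have htends : Filter.Tendsto (fun l : ℕ => (s * lb) ^ l * E (X 0))
      Filter.atTop (nhds 0) := by
    have := (tendsto_pow_atTop_nhds_zero_of_lt_one hsl0 hlt).mul_const (E (X 0))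
    simpa using this
  exact squeeze_zero (fun l => hEnonneg (X l)) hmain htends
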